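/- Let P ∈ ℝ^{n×N} with ‖P‖₂ = 1, let W* ∈ ℝ^{n×n} be unitary, and let Z* := W*P satisfy Z* Z*ᵀ = Id. There exists a constant C > 0 such that the following holds: for every Z ∈ ℝ^{n×N} such that (i) for each k the support of the k-th row of Z − Z* is contained in the support of the k-th row of Z*, and (ii) ‖Z − Z*‖₂ ≤ 1/2, the matrix P Zᵀ is invertible, and the orthogonal matrix W := V Uᵀ obtained from any full SVD P Zᵀ = U Σ Vᵀ satisfies ‖W − W*‖_F ≤ q ‖Z − Z*‖_F + C ‖Z − Z*‖_F², where q := max_{1≤k≤n} ‖D_k Z* D̃_k‖₂. -/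

import Mathlib

open scoped BigOperators
open Matrix

/-- Frobenius norm of a real matrix. -/
noncomputable def frobNorm {m n : ℕ} (A : Matrix (Fin m) (Fin n) ℝ) : ℝ :=
  Real.sqrt (∑ i, ∑ j, (A i j) ^ 2)

/-- Spectral (largest singular value / ℓ2-operator) norm of a real matrix. -/
noncomputable def specNorm {m n : ℕ} (A : Matrix (Fin m) (Fin n) ℝ) : ℝ :=
  ‖LinearMap.toContinuousLinearMap (Matrix.toEuclideanLin A)‖

/-- Euclidean (ℓ2) norm of a vector. -/
noncomputable def vecNorm {n : ℕ} (v : Fin n → ℝ) : ℝ :=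
  Real.sqrt (∑ i, v i ^ 2)

/-- β(z): the smallest nonzero magnitude among the entries of `z`
(defined as `sInf` of the set of nonzero magnitudes; `0` if `z = 0`). -/
noncomputable def beta {n : ℕ} (z : Fin n → ℝ) : ℝ :=
  sInf {r : ℝ | ∃ i, z i ≠ 0 ∧ r = |z i|}

/-- `z` is an output of the hard-thresholding operator `H_s` applied to `y`:
there is a set `T` of `min s n` indices carrying largest-magnitude entries of `y`,
such that `z` agrees with `y` on `T` and vanishes off `T`. -/
def IsHardThreshold {n : ℕ} (s : ℕ) (y z : Fin n → ℝ) : Prop :=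
  ∃ T : Finset (Fin n), T.card = min s n ∧ (∀ i ∈ T, z i = y i) ∧ (∀ i ∉ T, z i = 0) ∧
    ∀ i ∈ T, ∀ j ∉ T, |y j| ≤ |y i|

/-- `A = U * S * Vᵀ` is a full singular value decomposition of `A`:
`U, V` orthogonal and `S` diagonal with nonnegative entries. -/
def IsFullSVD {n : ℕ} (A U S V : Matrix (Fin n) (Fin n) ℝ) : Prop :=
  Uᵀ * U = 1 ∧ Vᵀ * V = 1 ∧ (∀ i j, i ≠ j → S i j = 0) ∧ (∀ i, 0 ≤ S i i) ∧ A = U * S * Vᵀ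

/-- `W = V * Uᵀ` for some full SVD `A = U * S * Vᵀ`. -/
def IsPolarFromSVD {n : ℕ} (A W : Matrix (Fin n) (Fin n) ℝ) : Prop :=
  ∃ U S V, IsFullSVD A U S V ∧ W = V * Uᵀ

/-- `D_k`: the n×n diagonal matrix of ones with a zero at entry (k,k). -/
noncomputable def Dmat {n : ℕ} (k : Fin n) : Matrix (Fin n) (Fin n) ℝ :=
  Matrix.diagonal (fun i => if i = k then 0 else 1)

-- `D̃_k`: the N×N diagonal matrix with ones at the support of the k-th row of `Zs`.
open Classical in
noncomputable def Dtil {n N : ℕ} (Zs : Matrix (Fin n) (Fin N) ℝ) (k : Fin n) :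
    Matrix (Fin N) (Fin N) ℝ :=
  Matrix.diagonal (fun i => if Zs k i ≠ 0 then 1 else 0)

/-- `q = max_{1 ≤ k ≤ n} ‖D_k Z* D̃_k‖₂`. -/
noncomputable def qZero {n N : ℕ} (Zs : Matrix (Fin n) (Fin N) ℝ) : ℝ :=
  ⨆ k, specNorm (Dmat k * Zs * Dtil Zs k)

/-- Smallest singular value of an n×N matrix: `min_{‖x‖=1, x ∈ ℝⁿ} ‖Aᵀ x‖`. -/
noncomputable def sigmaMin {n N : ℕ} (A : Matrix (Fin n) (Fin N) ℝ) : ℝ :=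
  sInf {r : ℝ | ∃ x : EuclideanSpace ℝ (Fin n), ‖x‖ = 1 ∧ r = ‖Matrix.toEuclideanLin Aᵀ x‖}

/-- Condition number κ(A): ratio of largest to smallest singular value. -/
noncomputable def condNumber {n N : ℕ} (A : Matrix (Fin n) (Fin N) ℝ) : ℝ :=
  specNorm A / sigmaMin A

/-- `q = κ⁴(Z*) · max_{1 ≤ k ≤ n} ‖D_k Z* Z*ᵀ Z* D̃_k‖₂`. -/
noncomputable def qGen {n N : ℕ} (Zs : Matrix (Fin n) (Fin N) ℝ) : ℝ :=
  condNumber Zs ^ 4 * ⨆ k, specNorm (Dmat k * Zs * Zsᵀ * Zs * Dtil Zs k)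

lemma vecNorm_nonneg {n : ℕ} (v : Fin n → ℝ) : 0 ≤ vecNorm v := Real.sqrt_nonneg _

lemma vecNorm_eq {n : ℕ} (v : Fin n → ℝ) :
    vecNorm v = ‖(WithLp.equiv 2 (Fin n → ℝ)).symm v‖ := by
  rw [EuclideanSpace.norm_eq]
  simp [vecNorm, sq_abs]

lemma sq_vecNorm {n : ℕ} (v : Fin n → ℝ) : vecNorm v ^ 2 = ∑ i, v i ^ 2 :=
  Real.sq_sqrt (by positivity)

lemma specNorm_nonneg {m n : ℕ} (A : Matrix (Fin m) (Fin n) ℝ) : 0 ≤ specNorm A :=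
  norm_nonneg _

lemma vecNorm_mulVec_le {m n : ℕ} (A : Matrix (Fin m) (Fin n) ℝ) (x : Fin n → ℝ) :
    vecNorm (A.mulVec x) ≤ specNorm A * vecNorm x := by
  rw [vecNorm_eq, vecNorm_eq]
  exact (LinearMap.toContinuousLinearMap (Matrix.toEuclideanLin A)).le_opNorm ((WithLp.equiv 2 (Fin n → ℝ)).symm x)

lemma sq_sum_mulVec {m n : ℕ} (A : Matrix (Fin m) (Fin n) ℝ) (x : Fin n → ℝ) :
    ∑ i, (A.mulVec x) i ^ 2 = x ⬝ᵥ ((Aᵀ * A).mulVec x) := by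
  simp only [Matrix.mulVec, dotProduct, Matrix.mul_apply, Matrix.transpose_apply,
    Finset.sum_mul, Finset.mul_sum, sq]
  rw [Finset.sum_comm]
  congr 1; ext i
  rw [Finset.sum_comm]
  congr 1; ext j
  congr 1; ext k
  ring

lemma vecNorm_mulVec_orth {m n : ℕ} (A : Matrix (Fin m) (Fin n) ℝ) (h : Aᵀ * A = 1)
    (x : Fin n → ℝ) : vecNorm (A.mulVec x) = vecNorm x := by
  unfold vecNorm
  rw [sq_sum_mulVec, h, Matrix.one_mulVec]
  congr 1
  simp [dotProduct, sq]

-- triangle inequality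
lemma vecNorm_add_le {n : ℕ} (u v : Fin n → ℝ) :
    vecNorm (u + v) ≤ vecNorm u + vecNorm v := by
  rw [vecNorm_eq, vecNorm_eq, vecNorm_eq]
  exact norm_add_le _ _

lemma vecNorm_smul {n : ℕ} (c : ℝ) (v : Fin n → ℝ) (hc : 0 ≤ c) :
    vecNorm (c • v) = c * vecNorm v := by
  rw [vecNorm_eq, vecNorm_eq]
  have : (WithLp.equiv 2 (Fin n → ℝ)).symm (c • v) = c • (WithLp.equiv 2 (Fin n → ℝ)).symm v := rfl
  rw [this, norm_smul, Real.norm_eq_abs, abs_of_nonneg hc]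

-- Cauchy-Schwarz: dot product
lemma dot_le_vecNorm {n : ℕ} (u v : Fin n → ℝ) : u ⬝ᵥ v ≤ vecNorm u * vecNorm v :=
  Real.sum_mul_le_sqrt_mul_sqrt _ _ _

-- transpose spectral-type bound
lemma vecNorm_transpose_mulVec_le {m n : ℕ} (A : Matrix (Fin m) (Fin n) ℝ) (c : ℝ)
    (hc : 0 ≤ c) (h : ∀ x, vecNorm (A.mulVec x) ≤ c * vecNorm x) (y : Fin m → ℝ) :
    vecNorm (Aᵀ.mulVec y) ≤ c * vecNorm y := by
  have key : vecNorm (Aᵀ.mulVec y) ^ 2 ≤ vecNorm y * (c * vecNorm (Aᵀ.mulVec y)) := by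
    rw [sq_vecNorm, sq_sum_mulVec, Matrix.transpose_transpose]
    have : (A * Aᵀ).mulVec y = A.mulVec (Aᵀ.mulVec y) := (Matrix.mulVec_mulVec _ _ _).symm
    rw [this]
    calc y ⬝ᵥ A.mulVec (Aᵀ.mulVec y) ≤ vecNorm y * vecNorm (A.mulVec (Aᵀ.mulVec y)) :=
          dot_le_vecNorm _ _
      _ ≤ vecNorm y * (c * vecNorm (Aᵀ.mulVec y)) := by
          apply mul_le_mul_of_nonneg_left (h _) (vecNorm_nonneg _)
  rcases eq_or_lt_of_le (vecNorm_nonneg (Aᵀ.mulVec y)) with h0 | h0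
  · rw [← h0]; exact mul_nonneg hc (vecNorm_nonneg _)
  · nlinarith [vecNorm_nonneg y]

lemma frobNorm_nonneg {m n : ℕ} (A : Matrix (Fin m) (Fin n) ℝ) : 0 ≤ frobNorm A :=
  Real.sqrt_nonneg _

lemma sq_frobNorm {m n : ℕ} (A : Matrix (Fin m) (Fin n) ℝ) :
    frobNorm A ^ 2 = ∑ i, ∑ j, (A i j) ^ 2 :=
  Real.sq_sqrt (by positivity)

lemma frobNorm_eq_norm {m n : ℕ} (A : Matrix (Fin m) (Fin n) ℝ) :
    frobNorm A = ‖(WithLp.equiv 2 (Fin m × Fin n → ℝ)).symm (fun p => A p.1 p.2)‖ := by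
  rw [EuclideanSpace.norm_eq, Fintype.sum_prod_type, frobNorm]
  congr 1
  apply Finset.sum_congr rfl; intro i _
  apply Finset.sum_congr rfl; intro j _
  rw [Real.norm_eq_abs, sq_abs]
  rfl

lemma frobNorm_add_le {m n : ℕ} (A B : Matrix (Fin m) (Fin n) ℝ) :
    frobNorm (A + B) ≤ frobNorm A + frobNorm B := by
  rw [frobNorm_eq_norm, frobNorm_eq_norm, frobNorm_eq_norm]
  have : ((WithLp.equiv 2 (Fin m × Fin n → ℝ)).symm (fun p => (A + B) p.1 p.2)) =
      (WithLp.equiv 2 (Fin m × Fin n → ℝ)).symm (fun p => A p.1 p.2) +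
      (WithLp.equiv 2 (Fin m × Fin n → ℝ)).symm (fun p => B p.1 p.2) := rfl
  rw [this]
  exact norm_add_le _ _

lemma frobNorm_smul {m n : ℕ} (c : ℝ) (A : Matrix (Fin m) (Fin n) ℝ) (hc : 0 ≤ c) :
    frobNorm (c • A) = c * frobNorm A := by
  rw [frobNorm_eq_norm, frobNorm_eq_norm]
  have : ((WithLp.equiv 2 (Fin m × Fin n → ℝ)).symm (fun p => (c • A) p.1 p.2)) =
      c • (WithLp.equiv 2 (Fin m × Fin n → ℝ)).symm (fun p => A p.1 p.2) := rfl
  rw [this, norm_smul, Real.norm_eq_abs, abs_of_nonneg hc]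

lemma frobNorm_neg {m n : ℕ} (A : Matrix (Fin m) (Fin n) ℝ) : frobNorm (-A) = frobNorm A := by
  unfold frobNorm; congr 1; apply Finset.sum_congr rfl; intros; apply Finset.sum_congr rfl; intros
  simp

lemma frobNorm_sub_le {m n : ℕ} (A B : Matrix (Fin m) (Fin n) ℝ) :
    frobNorm (A - B) ≤ frobNorm A + frobNorm B := by
  rw [sub_eq_add_neg]
  exact (frobNorm_add_le _ _).trans (by rw [frobNorm_neg])

lemma sq_frobNorm_rows {m n : ℕ} (A : Matrix (Fin m) (Fin n) ℝ) :
    frobNorm A ^ 2 = ∑ i, vecNorm (A i) ^ 2 := by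
  rw [sq_frobNorm]
  exact Finset.sum_congr rfl (fun i _ => (sq_vecNorm (A i)).symm)

lemma sq_frobNorm_cols {m n : ℕ} (A : Matrix (Fin m) (Fin n) ℝ) :
    frobNorm A ^ 2 = ∑ j, vecNorm (fun i => A i j) ^ 2 := by
  rw [sq_frobNorm, Finset.sum_comm]
  exact Finset.sum_congr rfl (fun j _ => (sq_vecNorm _).symm)

lemma frobNorm_le_of_sq {m n : ℕ} (A : Matrix (Fin m) (Fin n) ℝ) (c : ℝ) (hc : 0 ≤ c)
    (h : frobNorm A ^ 2 ≤ c ^ 2) : frobNorm A ≤ c := by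
  nlinarith [frobNorm_nonneg A]

lemma frob_mul_left {m n p : ℕ} (A : Matrix (Fin m) (Fin n) ℝ) (B : Matrix (Fin n) (Fin p) ℝ)
    (c : ℝ) (hc : 0 ≤ c) (h : ∀ x, vecNorm (A.mulVec x) ≤ c * vecNorm x) :
    frobNorm (A * B) ≤ c * frobNorm B := by
  apply frobNorm_le_of_sq _ _ (mul_nonneg hc (frobNorm_nonneg _))
  rw [mul_pow, sq_frobNorm_cols (A * B), sq_frobNorm_cols B, Finset.mul_sum]
  apply Finset.sum_le_sum
  intro j _
  have hcol : (fun i => (A * B) i j) = A.mulVec (fun i => B i j) := by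
    funext i; simp [Matrix.mul_apply, Matrix.mulVec, dotProduct]
  rw [hcol, ← mul_pow]
  have := h (fun i => B i j)
  nlinarith [vecNorm_nonneg (A.mulVec (fun i => B i j)), vecNorm_nonneg (fun i => B i j)]

lemma frob_mul_right {m n p : ℕ} (A : Matrix (Fin m) (Fin n) ℝ) (B : Matrix (Fin n) (Fin p) ℝ)
    (c : ℝ) (hc : 0 ≤ c) (h : ∀ x, vecNorm (Bᵀ.mulVec x) ≤ c * vecNorm x) :
    frobNorm (A * B) ≤ c * frobNorm A := by
  apply frobNorm_le_of_sq _ _ (mul_nonneg hc (frobNorm_nonneg _))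
  rw [mul_pow, sq_frobNorm_rows (A * B), sq_frobNorm_rows A, Finset.mul_sum]
  apply Finset.sum_le_sum
  intro i _
  have hrow : (A * B) i = Bᵀ.mulVec (A i) := by
    funext l
    simp only [Matrix.mul_apply, Matrix.mulVec, dotProduct, Matrix.transpose_apply]
    exact Finset.sum_congr rfl (fun j _ => mul_comm _ _)
  rw [hrow, ← mul_pow]
  have := h (A i)
  nlinarith [vecNorm_nonneg (Bᵀ.mulVec (A i)), vecNorm_nonneg (A i)]

lemma vecNorm_mulVec_le_frob {m n : ℕ} (A : Matrix (Fin m) (Fin n) ℝ) (x : Fin n → ℝ) :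
    vecNorm (A.mulVec x) ≤ frobNorm A * vecNorm x := by
  have h2 : vecNorm (A.mulVec x) ^ 2 ≤ (frobNorm A * vecNorm x) ^ 2 := by
    rw [sq_vecNorm, mul_pow, sq_frobNorm_rows, sq_vecNorm, Finset.sum_mul]
    apply Finset.sum_le_sum
    intro i _
    have : A.mulVec x i = ∑ j, A i j * x j := rfl
    rw [this, sq_vecNorm]
    exact Finset.sum_mul_sq_le_sq_mul_sq _ _ _
  have hb : 0 ≤ frobNorm A * vecNorm x := mul_nonneg (frobNorm_nonneg A) (vecNorm_nonneg x)
  nlinarith [vecNorm_nonneg (A.mulVec x)]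

lemma vecNorm_neg {n : ℕ} (v : Fin n → ℝ) : vecNorm (-v) = vecNorm v := by
  unfold vecNorm; congr 1; apply Finset.sum_congr rfl; intros; simp

lemma vecNorm_eq_zero {n : ℕ} (v : Fin n → ℝ) (h : vecNorm v = 0) : v = 0 := by
  have hnn : (0:ℝ) ≤ ∑ i, v i ^ 2 := by positivity
  have hs : ∑ i, v i ^ 2 = 0 := by
    exact le_antisymm (Real.sqrt_eq_zero'.mp h) hnn
  funext i
  have := (Finset.sum_eq_zero_iff_of_nonneg (fun i _ => sq_nonneg (v i))).mp hs i (Finset.mem_univ i)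
  simpa using pow_eq_zero_iff (n := 2) (by norm_num) |>.mp this

lemma frobNorm_transpose {m n : ℕ} (A : Matrix (Fin m) (Fin n) ℝ) :
    frobNorm Aᵀ = frobNorm A := by
  unfold frobNorm
  rw [Finset.sum_comm]
  rfl

lemma diag_mulVec_bound {n : ℕ} (A : Matrix (Fin n) (Fin n) ℝ) (c : ℝ) (hc : 0 ≤ c)
    (hdiag : ∀ i j, i ≠ j → A i j = 0) (hb : ∀ i, |A i i| ≤ c) (x : Fin n → ℝ) :
    vecNorm (A.mulVec x) ≤ c * vecNorm x := by
  have happ : ∀ i, A.mulVec x i = A i i * x i := by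
    intro i
    unfold Matrix.mulVec dotProduct
    exact Finset.sum_eq_single i (fun j _ hj => by
      show A i j * x j = 0
      rw [hdiag i j (Ne.symm hj), zero_mul])
      (fun h => absurd (Finset.mem_univ i) h)
  have h2 : vecNorm (A.mulVec x) ^ 2 ≤ (c * vecNorm x) ^ 2 := by
    rw [sq_vecNorm, mul_pow, sq_vecNorm, Finset.mul_sum]
    apply Finset.sum_le_sum
    intro i _
    rw [happ i, mul_pow]
    have h1 : A i i ^ 2 ≤ c ^ 2 := by
      have := hb i
      nlinarith [abs_nonneg (A i i), sq_abs (A i i)]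
    nlinarith [sq_nonneg (x i)]
  have hb2 : 0 ≤ c * vecNorm x := mul_nonneg hc (vecNorm_nonneg x)
  nlinarith [vecNorm_nonneg (A.mulVec x)]

lemma specNorm_le_qZero {n N : ℕ} (Zs : Matrix (Fin n) (Fin N) ℝ) (k : Fin n) :
    specNorm (Dmat k * Zs * Dtil Zs k) ≤ qZero Zs :=
  le_ciSup (f := fun k => specNorm (Dmat k * Zs * Dtil Zs k))
    (Set.Finite.bddAbove (Set.finite_range _)) k

lemma qZero_nonneg {n N : ℕ} (Zs : Matrix (Fin n) (Fin N) ℝ) : 0 ≤ qZero Zs := by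
  rcases isEmpty_or_nonempty (Fin n) with h | h
  · unfold qZero
    rw [Real.iSup_of_isEmpty]
  · exact le_trans (specNorm_nonneg _) (specNorm_le_qZero Zs (Classical.arbitrary _))

lemma skew_bound {n N : ℕ} (Zs E : Matrix (Fin n) (Fin N) ℝ)
    (hsupp : ∀ k i, E k i ≠ 0 → Zs k i ≠ 0) :
    frobNorm (E * Zsᵀ - Zs * Eᵀ) ≤ 2 * qZero Zs * frobNorm E := by
  classical
  set q := qZero Zs with hq
  have hq0 : 0 ≤ q := qZero_nonneg Zs
  set v : Fin n → Fin n → ℝ := fun k => (Dmat k * Zs * Dtil Zs k).mulVec (E k) with hv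
  have hventry : ∀ k l, v k l = if l = k then 0 else ∑ i, E k i * Zs l i := by
    intro k l
    have hval : v k l = ∑ i, ((if l = k then (0:ℝ) else 1) * Zs l i *
        (if Zs k i ≠ 0 then (1:ℝ) else 0)) * E k i := by
      rw [hv]
      show ∑ i, (Dmat k * Zs * Dtil Zs k) l i * E k i = _
      apply Finset.sum_congr rfl
      intro i _
      congr 1
      unfold Dmat Dtil
      rw [Matrix.mul_diagonal, Matrix.diagonal_mul]
    rw [hval]
    by_cases hlk : l = k
    · simp [hlk]
    · simp only [if_neg hlk, one_mul]
      apply Finset.sum_congr rfl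
      intro i _
      by_cases hz : Zs k i = 0
      · have hE : E k i = 0 := by
          by_contra hE
          exact (hsupp k i hE) hz
        simp [hz, hE]
      · simp [hz, mul_comm]
  have hvnorm : ∀ k, ∑ l, v k l ^ 2 ≤ q ^ 2 * ∑ i, E k i ^ 2 := by
    intro k
    have h1 : vecNorm (v k) ≤ q * vecNorm (E k) := by
      calc vecNorm (v k) ≤ specNorm (Dmat k * Zs * Dtil Zs k) * vecNorm (E k) :=
            vecNorm_mulVec_le _ _
        _ ≤ q * vecNorm (E k) :=
            mul_le_mul_of_nonneg_right (specNorm_le_qZero Zs k) (vecNorm_nonneg _)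
    have h2 := sq_vecNorm (v k)
    have h3 := sq_vecNorm (E k)
    nlinarith [vecNorm_nonneg (v k), vecNorm_nonneg (E k), mul_nonneg hq0 (vecNorm_nonneg (E k))]
  have key : frobNorm (E * Zsᵀ - Zs * Eᵀ) ^ 2 ≤ (2 * q * frobNorm E) ^ 2 := by
    have hMentry : ∀ k l, (E * Zsᵀ - Zs * Eᵀ) k l = v k l - v l k := by
      intro k l
      have e1 : (E * Zsᵀ) k l = ∑ i, E k i * Zs l i := by
        simp [Matrix.mul_apply, Matrix.transpose_apply]
      have e2 : (Zs * Eᵀ) k l = ∑ i, E l i * Zs k i := by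
        simp only [Matrix.mul_apply, Matrix.transpose_apply]
        exact Finset.sum_congr rfl (fun i _ => mul_comm _ _)
      have : (E * Zsᵀ - Zs * Eᵀ) k l = (E * Zsᵀ) k l - (Zs * Eᵀ) k l := rfl
      rw [this, e1, e2, hventry k l, hventry l k]
      by_cases hlk : l = k
      · subst hlk; simp
      · rw [if_neg hlk, if_neg (Ne.symm hlk)]
    rw [sq_frobNorm]
    calc ∑ k, ∑ l, ((E * Zsᵀ - Zs * Eᵀ) k l) ^ 2
        = ∑ k, ∑ l, (v k l - v l k) ^ 2 := by
          apply Finset.sum_congr rfl; intro k _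
          apply Finset.sum_congr rfl; intro l _
          rw [hMentry]
      _ ≤ ∑ k, ∑ l, (2 * v k l ^ 2 + 2 * v l k ^ 2) := by
          apply Finset.sum_le_sum; intro k _
          apply Finset.sum_le_sum; intro l _
          nlinarith [sq_nonneg (v k l + v l k)]
      _ = 4 * ∑ k, ∑ l, v k l ^ 2 := by
          have hswap : (∑ k, ∑ l, v l k ^ 2) = ∑ k, ∑ l, v k l ^ 2 := Finset.sum_comm
          simp only [Finset.sum_add_distrib, ← Finset.mul_sum]
          rw [hswap]
          ring
      _ ≤ 4 * (q ^ 2 * ∑ k, ∑ i, E k i ^ 2) := by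
          have h := Finset.sum_le_sum
            (fun k (_ : k ∈ (Finset.univ : Finset (Fin n))) => hvnorm k)
          rw [← Finset.mul_sum] at h
          linarith
      _ = (2 * q * frobNorm E) ^ 2 := by
          rw [mul_pow, mul_pow, sq_frobNorm]
          ring
  have hb : 0 ≤ 2 * q * frobNorm E :=
    mul_nonneg (mul_nonneg (by norm_num) hq0) (frobNorm_nonneg E)
  nlinarith [frobNorm_nonneg (E * Zsᵀ - Zs * Eᵀ)]

lemma mul_cancel_left_one {n : ℕ} {A B : Matrix (Fin n) (Fin n) ℝ} (h : A * B = 1)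
    (C : Matrix (Fin n) (Fin n) ℝ) : A * (B * C) = C := by
  rw [← Matrix.mul_assoc, h, Matrix.one_mul]

lemma orth_frobNorm {n : ℕ} (A : Matrix (Fin n) (Fin n) ℝ) (h : A * Aᵀ = 1) :
    frobNorm A = Real.sqrt n := by
  unfold frobNorm
  congr 1
  have hrow : ∀ k, ∑ l, A k l ^ 2 = 1 := by
    intro k
    have : (A * Aᵀ) k k = ∑ l, A k l ^ 2 := by
      simp [Matrix.mul_apply, Matrix.transpose_apply, sq]
    rw [h] at this
    simpa [Matrix.one_apply_eq] using this.symm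
  simp [hrow]

lemma polar_step {n : ℕ} (Mm Q O S : Matrix (Fin n) (Fin n) ℝ)
    (hQtQ : Qᵀ * Q = 1) (hQQt : Q * Qᵀ = 1) (hOtO : Oᵀ * O = 1) (hOOt : O * Oᵀ = 1)
    (hSdiag : ∀ i j, i ≠ j → S i j = 0) (hSpos : ∀ i, 0 ≤ S i i)
    (hkey : Qᵀ * (1 + Mm) = O * S * Oᵀ) (hFM : frobNorm Mm ≤ 1/6) :
    frobNorm (Q - 1) ≤ (1/2) * frobNorm (Mm - Mmᵀ) + 4 * frobNorm Mm ^ 2 := by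
  set FM := frobNorm Mm with hFMdef
  have hFM0 : 0 ≤ FM := frobNorm_nonneg Mm
  have hMv : ∀ x, vecNorm (Mm.mulVec x) ≤ FM * vecNorm x := vecNorm_mulVec_le_frob Mm
  have key2 : Q * (O * S * Oᵀ) = 1 + Mm := by
    rw [← hkey, ← Matrix.mul_assoc, hQQt, Matrix.one_mul]
  -- singular values are within FM of 1
  have hsigma : ∀ i, |S i i - 1| ≤ FM := by
    intro i
    set u := O.mulVec (Pi.single i 1) with hu
    have hunorm : vecNorm u = 1 := by
      have h1 : ∀ l, u l = O l i := by
        intro l; rw [hu, Matrix.mulVec_single]; exact mul_one _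
      have h2 : ∑ l, u l ^ 2 = (Oᵀ * O) i i := by
        simp only [Matrix.mul_apply, Matrix.transpose_apply, sq, h1]
      rw [hOtO, Matrix.one_apply_eq] at h2
      unfold vecNorm
      rw [h2, Real.sqrt_one]
    have h1 : (O * S * Oᵀ).mulVec u = S i i • u := by
      rw [hu, Matrix.mulVec_mulVec, Matrix.mul_assoc, hOtO, Matrix.mul_one]
      rw [Matrix.mulVec_single]
      funext l
      have hcol : (O * S) l i = O l i * S i i :=
        Finset.sum_eq_single i (fun j _ hj => by
            show O l j * S j i = 0
            rw [hSdiag j i hj, mul_zero])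
          (fun h => absurd (Finset.mem_univ i) h)
      show (O * S) l i * 1 = S i i • (O.mulVec (Pi.single i 1)) l
      rw [Matrix.mulVec_single]
      show (O * S) l i * 1 = S i i * (O l i * 1)
      rw [hcol]; ring
    have h2 : (1 + Mm).mulVec u = S i i • (Q.mulVec u) := by
      rw [← key2, ← Matrix.mulVec_mulVec, h1, Matrix.mulVec_smul]
    have h3 : vecNorm ((1 + Mm).mulVec u) = S i i := by
      rw [h2, vecNorm_smul _ _ (hSpos i), vecNorm_mulVec_orth Q hQtQ u, hunorm, mul_one]
    have h4 : (1 + Mm).mulVec u = u + Mm.mulVec u := by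
      rw [Matrix.add_mulVec, Matrix.one_mulVec]
    have hMu : vecNorm (Mm.mulVec u) ≤ FM := by
      have := hMv u; rw [hunorm, mul_one] at this; exact this
    have hup : S i i ≤ 1 + FM := by
      rw [← h3, h4]
      calc vecNorm (u + Mm.mulVec u) ≤ vecNorm u + vecNorm (Mm.mulVec u) := vecNorm_add_le _ _
        _ ≤ 1 + FM := by rw [hunorm]; linarith
    have hlow : 1 - FM ≤ S i i := by
      have h5 : u = (u + Mm.mulVec u) + (-(Mm.mulVec u)) := by abel
      have h6 : vecNorm u ≤ vecNorm (u + Mm.mulVec u) + vecNorm (Mm.mulVec u) := by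
        calc vecNorm u = vecNorm ((u + Mm.mulVec u) + (-(Mm.mulVec u))) := by rw [← h5]
          _ ≤ vecNorm (u + Mm.mulVec u) + vecNorm (-(Mm.mulVec u)) := vecNorm_add_le _ _
          _ = vecNorm (u + Mm.mulVec u) + vecNorm (Mm.mulVec u) := by rw [vecNorm_neg]
      rw [hunorm, ← h4] at h6
      rw [h3] at h6
      linarith
    rw [abs_le]; constructor <;> linarith
  -- bound on (O*S*Oᵀ - 1)
  have hH1v : ∀ x, vecNorm ((O * S * Oᵀ - 1).mulVec x) ≤ FM * vecNorm x := by
    intro x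
    have hfact : O * S * Oᵀ - 1 = O * (S - 1) * Oᵀ := by
      rw [Matrix.mul_sub, Matrix.mul_one, Matrix.sub_mul, hOOt]
    rw [hfact]
    have h1 : (O * (S - 1) * Oᵀ).mulVec x = O.mulVec ((S - 1).mulVec (Oᵀ.mulVec x)) := by
      rw [Matrix.mulVec_mulVec, Matrix.mulVec_mulVec]
    rw [h1, vecNorm_mulVec_orth O hOtO]
    have h2 : vecNorm ((S - 1).mulVec (Oᵀ.mulVec x)) ≤ FM * vecNorm (Oᵀ.mulVec x) := by
      apply diag_mulVec_bound _ _ hFM0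
      · intro i j hij
        show S i j - (1 : Matrix (Fin n) (Fin n) ℝ) i j = 0
        rw [hSdiag i j hij, Matrix.one_apply_ne hij, sub_zero]
      · intro i
        show |S i i - (1 : Matrix (Fin n) (Fin n) ℝ) i i| ≤ FM
        rw [Matrix.one_apply_eq]
        exact hsigma i
    have h3 : vecNorm (Oᵀ.mulVec x) = vecNorm x := by
      apply vecNorm_mulVec_orth
      rw [Matrix.transpose_transpose]
      exact hOOt
    rw [h3] at h2
    exact h2
  set X := Q - 1 with hX
  have hQeq : Q = 1 + X := by rw [hX]; abel
  -- pointwise bound on X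
  have hXv : ∀ x, vecNorm (X.mulVec x) ≤ (2 * FM) * vecNorm x := by
    intro x
    have hXeq : X = Mm - Q * (O * S * Oᵀ - 1) := by
      rw [Matrix.mul_sub, Matrix.mul_one, key2, hX]; abel
    rw [hXeq, Matrix.sub_mulVec]
    have h1 : vecNorm (Mm.mulVec x - (Q * (O * S * Oᵀ - 1)).mulVec x) ≤
        vecNorm (Mm.mulVec x) + vecNorm ((Q * (O * S * Oᵀ - 1)).mulVec x) := by
      rw [sub_eq_add_neg]
      calc _ ≤ vecNorm (Mm.mulVec x) + vecNorm (-(Q * (O * S * Oᵀ - 1)).mulVec x) :=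
            vecNorm_add_le _ _
        _ = _ := by rw [vecNorm_neg]
    have h2 : vecNorm ((Q * (O * S * Oᵀ - 1)).mulVec x) ≤ FM * vecNorm x := by
      rw [← Matrix.mulVec_mulVec, vecNorm_mulVec_orth Q hQtQ]
      exact hH1v x
    have h3 := hMv x
    calc _ ≤ _ := h1
      _ ≤ FM * vecNorm x + FM * vecNorm x := add_le_add h3 h2
      _ = (2 * FM) * vecNorm x := by ring
  -- matrix identities
  have hQt : Qᵀ = 1 + Xᵀ := by rw [hQeq, Matrix.transpose_add, Matrix.transpose_one]
  have e1 : X + Xᵀ + Xᵀ * X = 0 := by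
    have h : (1 + Xᵀ) * (1 + X) = 1 := by rw [← hQt, ← hQeq]; exact hQtQ
    calc X + Xᵀ + Xᵀ * X = (1 + Xᵀ) * (1 + X) - 1 := by
          rw [Matrix.add_mul, Matrix.one_mul, Matrix.mul_add, Matrix.mul_one]; abel
      _ = 0 := by rw [h, sub_self]
  have e2 : X - Xᵀ = (Mm - Mmᵀ) + (Xᵀ * Mm - Mmᵀ * X) := by
    have hSt : Sᵀ = S := by
      ext i j
      by_cases h : i = j
      · subst h; rfl
      · rw [Matrix.transpose_apply, hSdiag j i (Ne.symm h), hSdiag i j h]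
    have hS : (O * S * Oᵀ)ᵀ = O * S * Oᵀ := by
      rw [Matrix.transpose_mul, Matrix.transpose_mul, Matrix.transpose_transpose, hSt,
        Matrix.mul_assoc]
    have hsym : (1 + Mmᵀ) * Q = Qᵀ * (1 + Mm) := by
      have h := congrArg Matrix.transpose hkey
      rw [Matrix.transpose_mul, Matrix.transpose_transpose, Matrix.transpose_add,
        Matrix.transpose_one, hS, ← hkey] at h
      exact h
    have hexp : (1 + Mmᵀ) * (1 + X) = (1 + Xᵀ) * (1 + Mm) := by
      rw [← hQeq, ← hQt]; exact hsym
    calc X - Xᵀ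
        = ((1 + Mmᵀ) * (1 + X) - (1 + Xᵀ) * (1 + Mm)) +
          ((Mm - Mmᵀ) + (Xᵀ * Mm - Mmᵀ * X)) := by
          rw [Matrix.add_mul, Matrix.one_mul, Matrix.mul_add, Matrix.mul_one,
            Matrix.add_mul, Matrix.one_mul, Matrix.mul_add, Matrix.mul_one]
          abel
      _ = (Mm - Mmᵀ) + (Xᵀ * Mm - Mmᵀ * X) := by rw [hexp, sub_self, zero_add]
  have e3 : X + X = (Mm - Mmᵀ) + ((Xᵀ * Mm - Mmᵀ * X) - Xᵀ * X) := by
    have h1 : X + Xᵀ = -(Xᵀ * X) := eq_neg_of_add_eq_zero_left e1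
    calc X + X = (X - Xᵀ) + (X + Xᵀ) := by abel
      _ = ((Mm - Mmᵀ) + (Xᵀ * Mm - Mmᵀ * X)) + -(Xᵀ * X) := by rw [e2, h1]
      _ = (Mm - Mmᵀ) + ((Xᵀ * Mm - Mmᵀ * X) - Xᵀ * X) := by abel
  -- Frobenius estimates
  set FX := frobNorm X with hFXdef
  have hFX0 : 0 ≤ FX := frobNorm_nonneg X
  have hXtv := vecNorm_transpose_mulVec_le X (2 * FM) (by linarith) hXv
  have hMtv := vecNorm_transpose_mulVec_le Mm FM hFM0 hMv
  have hXM : frobNorm (Xᵀ * Mm) ≤ (2 * FM) * FM := frob_mul_left Xᵀ Mm (2 * FM) (by linarith) hXtv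
  have hMX : frobNorm (Mmᵀ * X) ≤ FM * FX := frob_mul_left Mmᵀ X FM hFM0 hMtv
  have hXX : frobNorm (Xᵀ * X) ≤ (2 * FM) * FX := frob_mul_left Xᵀ X (2 * FM) (by linarith) hXtv
  have hmain : 2 * FX ≤ frobNorm (Mm - Mmᵀ) + ((2 * FM) * FM + FM * FX + (2 * FM) * FX) := by
    have h0 : frobNorm (X + X) = 2 * FX := by
      have : X + X = (2 : ℝ) • X := (two_smul ℝ X).symm
      rw [this, frobNorm_smul _ _ (by norm_num)]
    calc 2 * FX = frobNorm (X + X) := h0.symm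
      _ = frobNorm ((Mm - Mmᵀ) + ((Xᵀ * Mm - Mmᵀ * X) - Xᵀ * X)) := by rw [e3]
      _ ≤ frobNorm (Mm - Mmᵀ) + frobNorm ((Xᵀ * Mm - Mmᵀ * X) - Xᵀ * X) := frobNorm_add_le _ _
      _ ≤ frobNorm (Mm - Mmᵀ) + (frobNorm (Xᵀ * Mm - Mmᵀ * X) + frobNorm (Xᵀ * X)) := by
          have := frobNorm_sub_le (Xᵀ * Mm - Mmᵀ * X) (Xᵀ * X)
          linarith
      _ ≤ frobNorm (Mm - Mmᵀ) + ((frobNorm (Xᵀ * Mm) + frobNorm (Mmᵀ * X)) + frobNorm (Xᵀ * X)) := by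
          have := frobNorm_sub_le (Xᵀ * Mm) (Mmᵀ * X)
          linarith
      _ ≤ _ := by linarith
  have hskew2 : frobNorm (Mm - Mmᵀ) ≤ 2 * FM := by
    have h1 := frobNorm_sub_le Mm Mmᵀ
    rw [frobNorm_transpose] at h1
    linarith
  have hapriori : FX ≤ 2 * FM := by nlinarith
  nlinarith


/-- one operator-update step contracts the error:
`‖W − W*‖_F ≤ q ‖Z − Z*‖_F + C ‖Z − Z*‖_F²` with `q = max_k ‖D_k Z* D̃_k‖₂`. -/
theorem stmt12
    {n N : ℕ} (P : Matrix (Fin n) (Fin N) ℝ) (Ws : Matrix (Fin n) (Fin n) ℝ)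
    (Zs : Matrix (Fin n) (Fin N) ℝ)
    (hP : specNorm P = 1) (hWs : Wsᵀ * Ws = 1)
    (hZs : Zs = Ws * P) (hZZ : Zs * Zsᵀ = 1) :
    ∃ C : ℝ, 0 < C ∧ ∀ Z : Matrix (Fin n) (Fin N) ℝ,
      (∀ k i, (Z - Zs) k i ≠ 0 → Zs k i ≠ 0) →
      specNorm (Z - Zs) ≤ 1/2 →
      IsUnit (P * Zᵀ) ∧
      ∀ U S V : Matrix (Fin n) (Fin n) ℝ, IsFullSVD (P * Zᵀ) U S V →
        frobNorm (V * Uᵀ - Ws) ≤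
          qZero Zs * frobNorm (Z - Zs) + C * frobNorm (Z - Zs) ^ 2 := by
  classical
  have hWWt : Ws * Wsᵀ = 1 := mul_eq_one_comm.mp hWs
  have hPPt : P * Pᵀ = 1 := by
    have hPeq : P = Wsᵀ * Zs := by rw [hZs, ← Matrix.mul_assoc, hWs, Matrix.one_mul]
    rw [hPeq, Matrix.transpose_mul, Matrix.transpose_transpose]
    have h2 : Zs * (Zsᵀ * Ws) = Ws := by rw [← Matrix.mul_assoc, hZZ, Matrix.one_mul]
    simp only [Matrix.mul_assoc]
    rw [h2, hWs]
  refine ⟨72 * Real.sqrt n + 5, by positivity, ?_⟩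
  intro Z hsupp hspec
  set E := Z - Zs with hE
  set Mm := E * Zsᵀ with hM
  have hPt : Zsᵀ * Ws = Pᵀ := by
    rw [hZs, Matrix.transpose_mul, Matrix.mul_assoc, hWs, Matrix.mul_one]
  have hZP : Z * Pᵀ = (1 + Mm) * Ws := by
    have h1 : Z = Zs + E := by rw [hE]; abel
    rw [Matrix.add_mul, Matrix.one_mul, hM, Matrix.mul_assoc, hPt]
    conv_lhs => rw [h1]
    rw [Matrix.add_mul]
    congr 1
    rw [hZs, Matrix.mul_assoc, hPPt, Matrix.mul_one]
  have hZv : ∀ x, vecNorm (Zsᵀ.mulVec x) = vecNorm x := by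
    intro x; apply vecNorm_mulVec_orth; rw [Matrix.transpose_transpose]; exact hZZ
  have hEv : ∀ x, vecNorm (E.mulVec x) ≤ (1/2) * vecNorm x := by
    intro x
    calc vecNorm (E.mulVec x) ≤ specNorm E * vecNorm x := vecNorm_mulVec_le E x
      _ ≤ (1/2) * vecNorm x := mul_le_mul_of_nonneg_right hspec (vecNorm_nonneg x)
  have hMv : ∀ x, vecNorm (Mm.mulVec x) ≤ (1/2) * vecNorm x := by
    intro x
    rw [hM, ← Matrix.mulVec_mulVec]
    calc vecNorm (E.mulVec (Zsᵀ.mulVec x)) ≤ (1/2) * vecNorm (Zsᵀ.mulVec x) := hEv _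
      _ = (1/2) * vecNorm x := by rw [hZv]
  have hPZ : P * Zᵀ = Wsᵀ * (1 + Mmᵀ) := by
    have h := congrArg Matrix.transpose hZP
    rw [Matrix.transpose_mul, Matrix.transpose_mul, Matrix.transpose_transpose,
      Matrix.transpose_add, Matrix.transpose_one] at h
    exact h
  have hunit : IsUnit (P * Zᵀ) := by
    rw [Matrix.isUnit_iff_isUnit_det, isUnit_iff_ne_zero]
    intro hdet
    obtain ⟨v, hv0, hv⟩ := Matrix.exists_mulVec_eq_zero_iff.mpr hdet
    have h1 : (1 + Mmᵀ).mulVec v = 0 := by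
      have h2 : Ws.mulVec ((P * Zᵀ).mulVec v) = 0 := by rw [hv, Matrix.mulVec_zero]
      rw [hPZ, Matrix.mulVec_mulVec, ← Matrix.mul_assoc, hWWt, Matrix.one_mul] at h2
      exact h2
    rw [Matrix.add_mulVec, Matrix.one_mulVec] at h1
    have h5 : v = -(Mmᵀ.mulVec v) := eq_neg_of_add_eq_zero_left h1
    have h4 : vecNorm v ≤ (1/2) * vecNorm v := by
      calc vecNorm v = vecNorm (Mmᵀ.mulVec v) := by conv_lhs => rw [h5, vecNorm_neg]
        _ ≤ (1/2) * vecNorm v := vecNorm_transpose_mulVec_le Mm (1/2) (by norm_num) hMv v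
    have h6 : vecNorm v = 0 := by nlinarith [vecNorm_nonneg v]
    exact hv0 (vecNorm_eq_zero v h6)
  refine ⟨hunit, ?_⟩
  intro U S V hSVD
  obtain ⟨hU, hV, hSdiag, hSpos, hA⟩ := hSVD
  have hUUt : U * Uᵀ = 1 := mul_eq_one_comm.mp hU
  have hVVt : V * Vᵀ = 1 := mul_eq_one_comm.mp hV
  have hSt : Sᵀ = S := by
    ext i j
    by_cases h : i = j
    · subst h; rfl
    · rw [Matrix.transpose_apply, hSdiag j i (Ne.symm h), hSdiag i j h]
  set W := V * Uᵀ with hW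
  set Q := W * Wsᵀ with hQ
  set O := Ws * U with hO
  have hB : (1 : Matrix (Fin n) (Fin n) ℝ) + Mm = V * S * Uᵀ * Wsᵀ := by
    have h1 : Z * Pᵀ * Wsᵀ = 1 + Mm := by
      rw [hZP, Matrix.mul_assoc, hWWt, Matrix.mul_one]
    have h2 : Z * Pᵀ = V * S * Uᵀ := by
      have h := congrArg Matrix.transpose hA
      rw [Matrix.transpose_mul, Matrix.transpose_mul, Matrix.transpose_mul,
        Matrix.transpose_transpose, Matrix.transpose_transpose, hSt] at h
      rw [h, Matrix.mul_assoc]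
    rw [← h1, h2]
  have hQtQ : Qᵀ * Q = 1 := by
    rw [hQ, hW]
    simp only [Matrix.transpose_mul, Matrix.transpose_transpose, Matrix.mul_assoc]
    rw [mul_cancel_left_one hV, mul_cancel_left_one hUUt]
    exact hWWt
  have hQQt : Q * Qᵀ = 1 := by
    rw [hQ, hW]
    simp only [Matrix.transpose_mul, Matrix.transpose_transpose, Matrix.mul_assoc]
    rw [mul_cancel_left_one hWs, mul_cancel_left_one hU]
    exact hVVt
  have hOtO : Oᵀ * O = 1 := by
    rw [hO]
    simp only [Matrix.transpose_mul, Matrix.mul_assoc]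
    rw [mul_cancel_left_one hWs]
    exact hU
  have hOOt : O * Oᵀ = 1 := by
    rw [hO]
    simp only [Matrix.transpose_mul, Matrix.mul_assoc]
    rw [mul_cancel_left_one hUUt]
    exact hWWt
  have hkey : Qᵀ * (1 + Mm) = O * S * Oᵀ := by
    rw [hB, hQ, hW, hO]
    simp only [Matrix.transpose_mul, Matrix.transpose_transpose, Matrix.mul_assoc]
    rw [mul_cancel_left_one hV]
  have hMF : frobNorm Mm ≤ frobNorm E := by
    have hZs2 : ∀ x, vecNorm (Zsᵀᵀ.mulVec x) ≤ 1 * vecNorm x := by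
      intro x
      rw [Matrix.transpose_transpose, one_mul]
      have h1 : Zs.mulVec x = Ws.mulVec (P.mulVec x) := by
        rw [hZs, Matrix.mulVec_mulVec]
      rw [h1, vecNorm_mulVec_orth Ws hWs]
      calc vecNorm (P.mulVec x) ≤ specNorm P * vecNorm x := vecNorm_mulVec_le P x
        _ = vecNorm x := by rw [hP, one_mul]
    have h := frob_mul_right E Zsᵀ 1 (by norm_num) hZs2
    rw [one_mul] at h
    exact h
  have hFE0 : 0 ≤ frobNorm E := frobNorm_nonneg E
  have hFM0 : 0 ≤ frobNorm Mm := frobNorm_nonneg Mm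
  have hq0 : 0 ≤ qZero Zs := qZero_nonneg Zs
  have hsn : 0 ≤ Real.sqrt n := Real.sqrt_nonneg n
  have hWWs : W - Ws = (Q - 1) * Ws := by
    rw [hQ, Matrix.sub_mul, Matrix.one_mul, Matrix.mul_assoc, hWs, Matrix.mul_one]
  have hfrob1 : frobNorm ((Q - 1) * Ws) ≤ frobNorm (Q - 1) := by
    have hWsv : ∀ x, vecNorm (Wsᵀ.mulVec x) ≤ 1 * vecNorm x := by
      intro x
      rw [one_mul]
      exact le_of_eq (vecNorm_mulVec_orth Wsᵀ (by rw [Matrix.transpose_transpose]; exact hWWt) x)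
    have h := frob_mul_right (Q - 1) Ws 1 (by norm_num) hWsv
    rwa [one_mul] at h
  by_cases hcase : frobNorm E ≤ 1/6
  · have hstep := polar_step Mm Q O S hQtQ hQQt hOtO hOOt hSdiag hSpos hkey (hMF.trans hcase)
    have hskew := skew_bound Zs E hsupp
    have hMmt : Mm - Mmᵀ = E * Zsᵀ - Zs * Eᵀ := by
      rw [hM, Matrix.transpose_mul, Matrix.transpose_transpose]
    rw [← hMmt] at hskew
    calc frobNorm (W - Ws) = frobNorm ((Q - 1) * Ws) := by rw [hWWs]
      _ ≤ frobNorm (Q - 1) := hfrob1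
      _ ≤ (1/2) * frobNorm (Mm - Mmᵀ) + 4 * frobNorm Mm ^ 2 := hstep
      _ ≤ qZero Zs * frobNorm E + (72 * Real.sqrt n + 5) * frobNorm E ^ 2 := by nlinarith
  · have hFE1 : 1/6 < frobNorm E := lt_of_not_ge hcase
    have hWo : W * Wᵀ = 1 := by
      rw [hW]
      simp only [Matrix.transpose_mul, Matrix.transpose_transpose, Matrix.mul_assoc]
      rw [mul_cancel_left_one hU]
      exact hVVt
    have h1 : frobNorm W = Real.sqrt n := orth_frobNorm W hWo
    have h2 : frobNorm Ws = Real.sqrt n := orth_frobNorm Ws hWWt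
    have h3 : frobNorm (W - Ws) ≤ 2 * Real.sqrt n := by
      have := frobNorm_sub_le W Ws
      rw [h1, h2] at this
      linarith
    have h4 : 1/36 < frobNorm E ^ 2 := by
      have h7 := pow_lt_pow_left₀ hFE1 (by norm_num : (0:ℝ) ≤ 1/6) two_ne_zero
      norm_num at h7
      linarith
    calc frobNorm (W - Ws) ≤ 2 * Real.sqrt n := h3
      _ ≤ qZero Zs * frobNorm E + (72 * Real.sqrt n + 5) * frobNorm E ^ 2 := by
          have h5 : (72 * Real.sqrt n + 5) * (1/36) ≤ (72 * Real.sqrt n + 5) * frobNorm E ^ 2 :=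
            mul_le_mul_of_nonneg_left h4.le (by positivity)
          have h6 : 0 ≤ qZero Zs * frobNorm E := mul_nonneg hq0 hFE0
          linarith
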